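/- Let 0 → A → E → B → 0 be an extension of C*-algebras and n ∈ ℕ. If A has property (Λ_n) and rr(B) ≤ n, then rr(E) ≤ n. -/

import Mathlib

open scoped MultiplierAlgebra

namespace RR

/-- `Lg_n(A)_sa` is dense in `A_sa^n`: every self-adjoint `n`-tuple can be approximated by a
self-adjoint unimodular `n`-tuple (one whose sum of squares is invertible). -/
def LgSaDense (A : Type*) [CStarAlgebra A] (n : ℕ) : Prop :=
  ∀ a : Fin n → A, (∀ i, IsSelfAdjoint (a i)) → ∀ ε : ℝ, 0 < ε →
    ∃ b : Fin n → A, (∀ i, IsSelfAdjoint (b i)) ∧ IsUnit (∑ i, b i ^ 2) ∧ ∀ i, ‖a i - b i‖ < ε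

/-- The real rank of a unital C*-algebra: the least `n` such that `Lg_{n+1}(A)_sa` is dense
in `A_sa^{n+1}` (`∞` if there is no such `n`). -/
noncomputable def uRealRank (A : Type*) [CStarAlgebra A] : ℕ∞ :=
  sInf {c : ℕ∞ | ∃ n : ℕ, c = n ∧ LgSaDense A (n + 1)}

/-- The real rank of a (possibly nonunital) C*-algebra, defined via its unitization.
(For unital `A` this agrees with `uRealRank A`, since `rr (A ⊕ ℂ) = rr A`.) -/
noncomputable def realRank (A : Type*) [NonUnitalCStarAlgebra A] : ℕ∞ :=
  uRealRank (Unitization ℂ A)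

/-- The canonical image of `A` as an ideal in its multiplier algebra `𝓜(ℂ, A)`. -/
noncomputable def mIdeal (A : Type*) [NonUnitalCStarAlgebra A] : Set 𝓜(ℂ, A) :=
  Set.range (DoubleCentralizer.coe ℂ : A → 𝓜(ℂ, A))

/-- Property `(Λ_n)`: every self-adjoint `(n+1)`-tuple in `M(A)` whose image in the corona
`M(A)/A` is unimodular (i.e. whose sum of squares is invertible modulo `A`) can be approximated
arbitrarily well, keeping the same image modulo `A`, by a unimodular self-adjoint tuple. -/
def Lambda (A : Type*) [NonUnitalCStarAlgebra A] (n : ℕ) : Prop :=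
  ∀ a : Fin (n + 1) → 𝓜(ℂ, A), (∀ i, IsSelfAdjoint (a i)) →
    (∃ c : 𝓜(ℂ, A), c * (∑ i, a i ^ 2) - 1 ∈ mIdeal A ∧ (∑ i, a i ^ 2) * c - 1 ∈ mIdeal A) →
    ∀ ε : ℝ, 0 < ε →
      ∃ b : Fin (n + 1) → 𝓜(ℂ, A), (∀ i, IsSelfAdjoint (b i)) ∧ IsUnit (∑ i, b i ^ 2) ∧
        ∀ i, ‖a i - b i‖ < ε ∧ a i - b i ∈ mIdeal A

/-- The extension real rank `xrr(A)`: the least `n` such that `A` has `(Λ_m)` for all `m ≥ n`. -/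
noncomputable def xrr (A : Type*) [NonUnitalCStarAlgebra A] : ℕ∞ :=
  sInf {c : ℕ∞ | ∃ n : ℕ, c = n ∧ ∀ m : ℕ, n ≤ m → Lambda A m}

end RR

open scoped CStarAlgebra

namespace RRAux
variable {A : Type*} [NonUnitalCStarAlgebra A]

lemma zero_of_left (d : A) (h : ∀ z : A, z * d = 0) : d = 0 := by
  have := h (star d); rwa [CStarRing.star_mul_self_eq_zero_iff] at this

lemma zero_of_right (d : A) (h : ∀ z : A, d * z = 0) : d = 0 := by
  have := h (star d); rwa [CStarRing.mul_star_self_eq_zero_iff] at this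

lemma coe_injective : Function.Injective (DoubleCentralizer.coe ℂ : A → 𝓜(ℂ, A)) := by
  intro a b h
  have key : ∀ x : A, a * x = b * x := fun x => by
    have := congrArg (fun m : 𝓜(ℂ, A) => m.fst x) h
    simpa using this
  rw [← sub_eq_zero]
  refine zero_of_right _ fun z => ?_
  rw [sub_mul, key, sub_self]

lemma coe_zero : (DoubleCentralizer.coe ℂ (0 : A) : 𝓜(ℂ, A)) = 0 := by
  simpa using map_zero (DoubleCentralizer.coeHom (𝕜 := ℂ) (A := A))

lemma norm_coe (a : A) : ‖(DoubleCentralizer.coe ℂ a : 𝓜(ℂ, A))‖ = ‖a‖ := by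
  simpa using NonUnitalStarAlgHom.norm_map (DoubleCentralizer.coeHom (𝕜 := ℂ) (A := A))
    (fun _ _ h => coe_injective h) a

lemma mul_coe_eq (v : 𝓜(ℂ, A)) (a : A) :
    v * DoubleCentralizer.coe ℂ a = DoubleCentralizer.coe ℂ (v.fst a) := by
  refine DoubleCentralizer.ext _ _ _ _ (Prod.ext ?_ ?_)
  · refine ContinuousLinearMap.ext fun x => ?_
    show v.fst (a * x) = v.fst a * x
    rw [← sub_eq_zero]
    refine zero_of_left _ fun z => ?_
    rw [mul_sub, ← v.central, ← mul_assoc, v.central, mul_assoc, sub_self]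
  · refine ContinuousLinearMap.ext fun x => ?_
    show v.snd x * a = x * v.fst a
    exact v.central x a

lemma coe_mul_eq (v : 𝓜(ℂ, A)) (a : A) :
    DoubleCentralizer.coe ℂ a * v = DoubleCentralizer.coe ℂ (v.snd a) := by
  refine DoubleCentralizer.ext _ _ _ _ (Prod.ext ?_ ?_)
  · refine ContinuousLinearMap.ext fun x => ?_
    show a * v.fst x = v.snd a * x
    exact (v.central a x).symm
  · refine ContinuousLinearMap.ext fun x => ?_
    show v.snd (x * a) = x * v.snd a
    rw [← sub_eq_zero]
    refine zero_of_right _ fun z => ?_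
    rw [sub_mul, v.central, mul_assoc, ← v.central, ← mul_assoc, sub_self]

lemma coe_star (a : A) :
    star (DoubleCentralizer.coe ℂ a) = DoubleCentralizer.coe ℂ (star a) :=
  (map_star (DoubleCentralizer.coeHom (𝕜 := ℂ) (A := A)) a).symm


section Sigma
variable {E : Type*} [NonUnitalCStarAlgebra E]

/-- A choice of preimage under `ι`. -/
noncomputable def preA (ι : A →⋆ₙₐ[ℂ] E) : E → A :=
  letI : Nonempty A := ⟨0⟩
  Function.invFun ι

lemma ι_preA (ι : A →⋆ₙₐ[ℂ] E) {x : E} (hx : x ∈ Set.range ι) : ι (preA ι x) = x := by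
  letI : Nonempty A := ⟨0⟩
  exact Function.invFun_eq hx

variable (ι : A →⋆ₙₐ[ℂ] E) (hι : Function.Injective ι)
  (hL : ∀ (e : E) (a : A), e * ι a ∈ Set.range ι)
  (hR : ∀ (e : E) (a : A), ι a * e ∈ Set.range ι)

/-- Left multiplication by `e` as a continuous linear map on `A`. -/
noncomputable def sigmaL (e : E) : A →L[ℂ] A :=
  LinearMap.mkContinuous
    { toFun := fun a => preA ι (e * ι a)
      map_add' := fun a b => hι <| by
        show ι (preA ι (e * ι (a + b))) = ι (preA ι (e * ι a) + preA ι (e * ι b))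
        rw [ι_preA ι (hL e (a + b)), map_add ι (preA ι (e * ι a)) (preA ι (e * ι b)),
          ι_preA ι (hL e a), ι_preA ι (hL e b), map_add ι a b, mul_add]
      map_smul' := fun c a => hι <| by
        show ι (preA ι (e * ι (c • a))) = ι ((RingHom.id ℂ c) • preA ι (e * ι a))
        rw [ι_preA ι (hL e (c • a)), RingHom.id_apply, map_smul ι c (preA ι (e * ι a)),
          ι_preA ι (hL e a), map_smul ι c a, mul_smul_comm] }
    ‖e‖ fun a => by
      rw [← NonUnitalStarAlgHom.norm_map ι hι]
      show ‖ι (preA ι (e * ι a))‖ ≤ _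
      rw [ι_preA ι (hL e a)]
      calc ‖e * ι a‖ ≤ ‖e‖ * ‖ι a‖ := norm_mul_le _ _
        _ = ‖e‖ * ‖a‖ := by rw [NonUnitalStarAlgHom.norm_map ι hι]

/-- Right multiplication by `e` as a continuous linear map on `A`. -/
noncomputable def sigmaR (e : E) : A →L[ℂ] A :=
  LinearMap.mkContinuous
    { toFun := fun a => preA ι (ι a * e)
      map_add' := fun a b => hι <| by
        show ι (preA ι (ι (a + b) * e)) = ι (preA ι (ι a * e) + preA ι (ι b * e))
        rw [ι_preA ι (hR e (a + b)), map_add ι (preA ι (ι a * e)) (preA ι (ι b * e)),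
          ι_preA ι (hR e a), ι_preA ι (hR e b), map_add ι a b, add_mul]
      map_smul' := fun c a => hι <| by
        show ι (preA ι (ι (c • a) * e)) = ι ((RingHom.id ℂ c) • preA ι (ι a * e))
        rw [ι_preA ι (hR e (c • a)), RingHom.id_apply, map_smul ι c (preA ι (ι a * e)),
          ι_preA ι (hR e a), map_smul ι c a, smul_mul_assoc] }
    ‖e‖ fun a => by
      rw [← NonUnitalStarAlgHom.norm_map ι hι]
      show ‖ι (preA ι (ι a * e))‖ ≤ _
      rw [ι_preA ι (hR e a)]
      calc ‖ι a * e‖ ≤ ‖ι a‖ * ‖e‖ := norm_mul_le _ _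
        _ = ‖e‖ * ‖a‖ := by rw [NonUnitalStarAlgHom.norm_map ι hι, mul_comm]

@[simp] lemma sigmaL_apply (e : E) (a : A) : sigmaL ι hι hL e a = preA ι (e * ι a) := rfl
@[simp] lemma sigmaR_apply (e : E) (a : A) : sigmaR ι hι hR e a = preA ι (ι a * e) := rfl

/-- The canonical morphism `E → 𝓜(ℂ, A)` when `A` is an ideal in `E`. -/
noncomputable def sigmaHom : E →⋆ₙₐ[ℂ] 𝓜(ℂ, A) where
  toFun e :=
    { fst := sigmaL ι hι hL e
      snd := sigmaR ι hι hR e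
      central := fun x y => hι <| by
        rw [map_mul, map_mul, sigmaL_apply, sigmaR_apply, ι_preA ι (hR e x),
          ι_preA ι (hL e y), mul_assoc] }
  map_smul' c e := by
    refine DoubleCentralizer.ext _ _ _ _ (Prod.ext ?_ ?_) <;>
      refine ContinuousLinearMap.ext fun x => hι ?_
    · show ι (preA ι (c • e * ι x)) = ι (c • preA ι (e * ι x))
      rw [ι_preA ι (hL _ _), map_smul, ι_preA ι (hL _ _), smul_mul_assoc]
    · show ι (preA ι (ι x * c • e)) = ι (c • preA ι (ι x * e))
      rw [ι_preA ι (hR _ _), map_smul, ι_preA ι (hR _ _), mul_smul_comm]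
  map_zero' := by
    refine DoubleCentralizer.ext _ _ _ _ (Prod.ext ?_ ?_) <;>
      refine ContinuousLinearMap.ext fun x => hι ?_
    · show ι (preA ι (0 * ι x)) = ι 0
      rw [map_zero, zero_mul, ι_preA ι ⟨0, map_zero ι⟩]
    · show ι (preA ι (ι x * 0)) = ι 0
      rw [map_zero, mul_zero, ι_preA ι ⟨0, map_zero ι⟩]
  map_add' e f := by
    refine DoubleCentralizer.ext _ _ _ _ (Prod.ext ?_ ?_) <;>
      refine ContinuousLinearMap.ext fun x => hι ?_
    · show ι (preA ι ((e + f) * ι x)) = ι (preA ι (e * ι x) + preA ι (f * ι x))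
      rw [ι_preA ι (hL _ _), map_add, ι_preA ι (hL _ _), ι_preA ι (hL _ _), add_mul]
    · show ι (preA ι (ι x * (e + f))) = ι (preA ι (ι x * e) + preA ι (ι x * f))
      rw [ι_preA ι (hR _ _), map_add, ι_preA ι (hR _ _), ι_preA ι (hR _ _), mul_add]
  map_mul' e f := by
    refine DoubleCentralizer.ext _ _ _ _ (Prod.ext ?_ ?_) <;>
      refine ContinuousLinearMap.ext fun x => hι ?_
    · show ι (preA ι (e * f * ι x)) = ι (preA ι (e * ι (preA ι (f * ι x))))
      rw [ι_preA ι (hL _ _), ι_preA ι (hL _ _), ι_preA ι (hL _ _), mul_assoc]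
    · show ι (preA ι (ι x * (e * f))) = ι (preA ι (ι (preA ι (ι x * e)) * f))
      rw [ι_preA ι (hR _ _), ι_preA ι (hR _ _), ι_preA ι (hR _ _), mul_assoc]
  map_star' e := by
    refine DoubleCentralizer.ext _ _ _ _ (Prod.ext ?_ ?_) <;>
      refine ContinuousLinearMap.ext fun x => hι ?_
    · show ι (preA ι (star e * ι x)) = ι (star (preA ι (ι (star x) * e)))
      rw [ι_preA ι (hL _ _), map_star, ι_preA ι (hR _ _), star_mul, map_star, star_star]
    · show ι (preA ι (ι x * star e)) = ι (star (preA ι (e * ι (star x))))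
      rw [ι_preA ι (hR _ _), map_star, ι_preA ι (hL _ _), star_mul, map_star, star_star]

lemma sigmaHom_apply_ι (a : A) :
    sigmaHom ι hι hL hR (ι a) = DoubleCentralizer.coe ℂ a := by
  refine DoubleCentralizer.ext _ _ _ _ (Prod.ext ?_ ?_) <;>
    refine ContinuousLinearMap.ext fun x => hι ?_
  · show ι (preA ι (ι a * ι x)) = ι (a * x)
    rw [ι_preA ι ⟨a * x, by rw [map_mul]⟩]
    exact (map_mul ι a x).symm
  · show ι (preA ι (ι x * ι a)) = ι (x * a)
    rw [ι_preA ι ⟨x * a, by rw [map_mul]⟩]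
    exact (map_mul ι x a).symm

end Sigma
end RRAux

namespace RRAux
variable {D : Type*} [CStarAlgebra D]

lemma lgSaDense_succ {k : ℕ} (h : RR.LgSaDense D k) : RR.LgSaDense D (k + 1) := by
  intro a ha ε hε
  obtain ⟨c, hc_sa, hc_unit, hc_norm⟩ := h (fun i => a i.castSucc) (fun i => ha _) ε hε
  letI := CStarAlgebra.spectralOrder D
  haveI := CStarAlgebra.spectralOrderedRing D
  have sqnn : ∀ x : D, IsSelfAdjoint x → 0 ≤ x ^ 2 := fun x hx => by
    calc (0 : D) ≤ star x * x := star_mul_self_nonneg x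
      _ = x ^ 2 := by rw [hx.star_eq, sq]
  refine ⟨Fin.snoc c (a (Fin.last k)), ?_, ?_, ?_⟩
  · intro i
    induction i using Fin.lastCases with
    | last => simpa using ha _
    | cast j => simpa using hc_sa j
  · rw [Fin.sum_univ_castSucc]
    simp only [Fin.snoc_castSucc, Fin.snoc_last]
    refine (fun h0 hle => CStarAlgebra.isUnit_of_le _ hle (hc_unit.isStrictlyPositive h0)) ?_ ?_
    · exact Finset.sum_nonneg fun i _ => sqnn _ (hc_sa i)
    · exact le_add_of_nonneg_right (sqnn _ (ha _))
  · intro i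
    induction i using Fin.lastCases with
    | last => simpa using hε
    | cast j => simpa using hc_norm j

lemma lgSaDense_mono {m n : ℕ} (h : m ≤ n) (hm : RR.LgSaDense D m) : RR.LgSaDense D n := by
  induction n, h using Nat.le_induction with
  | base => exact hm
  | succ n hn ih => exact lgSaDense_succ ih

lemma lgSaDense_of_uRealRank_le {n : ℕ} (h : RR.uRealRank D ≤ n) :
    RR.LgSaDense D (n + 1) := by
  set T := {m : ℕ | RR.LgSaDense D (m + 1)} with hT
  have hTne : T.Nonempty := by
    by_contra hc
    rw [Set.not_nonempty_iff_eq_empty] at hc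
    have hS : {c : ℕ∞ | ∃ m : ℕ, c = m ∧ RR.LgSaDense D (m + 1)} = ∅ := by
      ext c
      simp only [Set.mem_setOf_eq, Set.mem_empty_iff_false, iff_false, not_exists]
      rintro m ⟨rfl, hm⟩
      exact absurd (show m ∈ T from hm) (by rw [hc]; exact Set.notMem_empty m)
    rw [RR.uRealRank, hS, sInf_empty] at h
    exact absurd h (by simp)
  have hmem : sInf T ∈ T := Nat.sInf_mem hTne
  have hle : ((sInf T : ℕ) : ℕ∞) ≤ RR.uRealRank D := by
    refine le_sInf ?_
    rintro c ⟨m, rfl, hm⟩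
    exact_mod_cast Nat.sInf_le (show m ∈ T from hm)
  have hfin : sInf T ≤ n := by exact_mod_cast hle.trans h
  exact lgSaDense_mono (by omega) hmem


variable {E B : Type*} [NonUnitalCStarAlgebra E] [NonUnitalCStarAlgebra B]

lemma exists_selfAdjoint_lift (π : E →⋆ₙₐ[ℂ] B) (hπ : Function.Surjective π)
    (w : Unitization ℂ B) (hw : IsSelfAdjoint w) :
    ∃ d : Unitization ℂ E, IsSelfAdjoint d ∧ Unitization.starMap π d = w ∧ ‖d‖ ≤ ‖w‖ := by
  obtain ⟨z₀, hz₀⟩ := Unitization.starMap_surjective hπ w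
  set z : Unitization ℂ E := (2⁻¹ : ℂ) • (z₀ + star z₀) with hzdef
  have hconj : (starRingEnd ℂ) (2⁻¹ : ℂ) = 2⁻¹ := by simp [Complex.ext_iff]
  have hz_sa : IsSelfAdjoint z := by
    rw [IsSelfAdjoint, hzdef, star_smul, star_add, star_star, RCLike.star_def, hconj, add_comm]
  have hπz : Unitization.starMap π z = w := by
    rw [hzdef, map_smul, map_add, map_star, hz₀, hw.star_eq, ← two_smul ℂ w,
      smul_smul]
    norm_num
  set r : ℝ := ‖w‖ with hr
  set f : ℝ → ℝ := fun t => max (-r) (min r t) with hf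
  have hfc : Continuous f := continuous_const.max (continuous_const.min continuous_id)
  refine ⟨cfc f z, cfc_predicate f z, ?_, ?_⟩
  · have h1 : Unitization.starMap π (cfc f z) = cfc f (Unitization.starMap π z) :=
      StarAlgHomClass.map_cfc (Unitization.starMap π) f z hfc.continuousOn
        (map_continuous _) hz_sa (by rw [hπz]; exact hw)
    rw [h1, hπz]
    have hspec : ∀ x ∈ spectrum ℝ w, f x = x := by
      intro x hx
      have hb : ‖x‖ ≤ ‖w‖ := spectrum.norm_le_norm_of_mem hx
      rw [Real.norm_eq_abs, abs_le] at hb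
      rw [hf]
      simp only
      rw [min_eq_right hb.2, max_eq_right hb.1]
    calc cfc f w = cfc (id : ℝ → ℝ) w := cfc_congr hspec
      _ = w := cfc_id ℝ w
  · refine norm_cfc_le (norm_nonneg w) fun x hx => ?_
    rw [Real.norm_eq_abs, abs_le]
    constructor
    · exact le_max_left _ _
    · exact max_le (neg_le_self (norm_nonneg w)) (min_le_left _ _)
end RRAux

/-- For an extension `0 → A → E → B → 0`, if `A` has `(Λ_n)` and
`rr(B) ≤ n`, then `rr(E) ≤ n`. -/
theorem realRank_extension_le_of_lambda (A E B : Type*) [NonUnitalCStarAlgebra A]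
    [NonUnitalCStarAlgebra E] [NonUnitalCStarAlgebra B]
    (ι : A →⋆ₙₐ[ℂ] E) (π : E →⋆ₙₐ[ℂ] B)
    (hι : Function.Injective ι) (hπ : Function.Surjective π)
    (hexact : ∀ x : E, π x = 0 ↔ x ∈ Set.range ι)
    (n : ℕ) (hΛ : RR.Lambda A n) (hB : RR.realRank B ≤ n) :
    RR.realRank E ≤ n := by
  classical
  have hL : ∀ (e : E) (a : A), e * ι a ∈ Set.range ι := fun e a =>
    (hexact _).mp (by rw [map_mul, (hexact (ι a)).mpr ⟨a, rfl⟩, mul_zero])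
  have hR : ∀ (e : E) (a : A), ι a * e ∈ Set.range ι := fun e a =>
    (hexact _).mp (by rw [map_mul, (hexact (ι a)).mpr ⟨a, rfl⟩, zero_mul])
  set σ : E →⋆ₙₐ[ℂ] 𝓜(ℂ, A) := RRAux.sigmaHom ι hι hL hR with hσdef
  set σ' : Unitization ℂ E →⋆ₐ[ℂ] 𝓜(ℂ, A) := Unitization.starLift σ with hσ'def
  set π' : Unitization ℂ E →⋆ₐ[ℂ] Unitization ℂ B := Unitization.starMap π with hπ'def
  have hπ'surj : Function.Surjective π' := Unitization.starMap_surjective hπ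
  have hσ'_inr : ∀ e : E, σ' (e : Unitization ℂ E) = σ e := fun e => by
    rw [hσ'def]; exact (Unitization.starLift_symm_apply_apply (Unitization.starLift σ) e).symm.trans (by rw [Equiv.symm_apply_apply])
  have hσ'_ι : ∀ a : A, σ' ((ι a : E) : Unitization ℂ E) = DoubleCentralizer.coe ℂ a :=
    fun a => by rw [hσ'_inr, hσdef, RRAux.sigmaHom_apply_ι]
  have hπ'_ι : ∀ a : A, π' ((ι a : E) : Unitization ℂ E) = 0 := fun a => by
    rw [hπ'def]
    simp only [Unitization.starMap_inr]
    rw [(hexact (ι a)).mpr ⟨a, rfl⟩]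
    simp
  have hπ'0 : ∀ z : Unitization ℂ E, π' z = 0 →
      ∃ a : A, z = ((ι a : E) : Unitization ℂ E) := by
    intro z hz
    induction z using Unitization.ind with
    | inl_add_inr r e =>
      rw [hπ'def] at hz
      have h1 : r = 0 := by
        simpa [Unitization.algebraMap_eq_inl] using congrArg (fun z : Unitization ℂ B => z.fst) hz
      have h2 : π e = 0 := by
        simpa [h1, Unitization.algebraMap_eq_inl] using congrArg (fun z : Unitization ℂ B => z.snd) hz
      obtain ⟨a, ha⟩ := (hexact e).mp h2
      exact ⟨a, by rw [h1, ha]; simp⟩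
  have hjoint : ∀ z : Unitization ℂ E, π' z = 0 → σ' z = 0 → z = 0 := by
    intro z h1 h2
    obtain ⟨a, rfl⟩ := hπ'0 z h1
    rw [hσ'_ι] at h2
    have ha : a = 0 := RRAux.coe_injective (by rw [h2, RRAux.coe_zero])
    rw [ha]; simp
  have hunit : ∀ s : Unitization ℂ E, IsUnit (π' s) → IsUnit (σ' s) → IsUnit s := by
    intro s h1 h2
    have hv1 : σ' s * ↑(h2.unit⁻¹) = 1 := by
      nth_rw 1 [← h2.unit_spec]; exact Units.mul_inv _
    have hv2 : (↑(h2.unit⁻¹) : 𝓜(ℂ, A)) * σ' s = 1 := by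
      nth_rw 2 [← h2.unit_spec]; exact Units.inv_mul _
    -- right inverse
    obtain ⟨t₀, ht₀⟩ := hπ'surj ↑(h1.unit⁻¹)
    have hst₀ : π' (s * t₀ - 1) = 0 := by
      rw [map_sub, map_mul, ht₀, map_one]
      nth_rw 1 [← h1.unit_spec]
      rw [Units.mul_inv, sub_self]
    obtain ⟨a₀, ha₀⟩ := hπ'0 _ hst₀
    have hσst : σ' s * σ' t₀ = 1 + DoubleCentralizer.coe ℂ a₀ := by
      have := congrArg σ' ha₀
      rw [map_sub, map_mul, map_one, hσ'_ι, sub_eq_iff_eq_add] at this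
      rw [this, add_comm]
    set t : Unitization ℂ E :=
      t₀ - ((ι ((↑(h2.unit⁻¹) : 𝓜(ℂ, A)).fst a₀) : E) : Unitization ℂ E) with htdef
    have hσt : σ' t = ↑(h2.unit⁻¹) := by
      rw [htdef, map_sub, hσ'_ι, ← RRAux.mul_coe_eq]
      have key : (↑(h2.unit⁻¹) : 𝓜(ℂ, A)) * (σ' s * σ' t₀) = σ' t₀ := by
        rw [← mul_assoc, hv2, one_mul]
      rw [hσst, mul_add, mul_one] at key
      rw [← key]; abel
    have hπt : π' t = ↑(h1.unit⁻¹) := by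
      rw [htdef, map_sub, hπ'_ι, sub_zero, ht₀]
    have hst : s * t = 1 := by
      have e1 : π' (s * t - 1) = 0 := by
        rw [map_sub, map_mul, hπt, map_one]
        nth_rw 1 [← h1.unit_spec]
        rw [Units.mul_inv, sub_self]
      have e2 : σ' (s * t - 1) = 0 := by
        rw [map_sub, map_mul, hσt, map_one, hv1, sub_self]
      have := hjoint _ e1 e2
      rwa [sub_eq_zero] at this
    -- left inverse
    obtain ⟨u₀, hu₀⟩ := hπ'surj ↑(h1.unit⁻¹)
    have hus₀ : π' (u₀ * s - 1) = 0 := by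
      rw [map_sub, map_mul, hu₀, map_one]
      nth_rw 2 [← h1.unit_spec]
      rw [Units.inv_mul, sub_self]
    obtain ⟨a₁, ha₁⟩ := hπ'0 _ hus₀
    have hσus : σ' u₀ * σ' s = 1 + DoubleCentralizer.coe ℂ a₁ := by
      have := congrArg σ' ha₁
      rw [map_sub, map_mul, map_one, hσ'_ι, sub_eq_iff_eq_add] at this
      rw [this, add_comm]
    set u : Unitization ℂ E :=
      u₀ - ((ι ((↑(h2.unit⁻¹) : 𝓜(ℂ, A)).snd a₁) : E) : Unitization ℂ E) with hudef
    have hσu : σ' u = ↑(h2.unit⁻¹) := by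
      rw [hudef, map_sub, hσ'_ι, ← RRAux.coe_mul_eq]
      have key : σ' u₀ * σ' s * ↑(h2.unit⁻¹) = σ' u₀ := by
        rw [mul_assoc, hv1, mul_one]
      rw [hσus, add_mul, one_mul] at key
      rw [← key]; abel
    have hπu : π' u = ↑(h1.unit⁻¹) := by
      rw [hudef, map_sub, hπ'_ι, sub_zero, hu₀]
    have hus : u * s = 1 := by
      have e1 : π' (u * s - 1) = 0 := by
        rw [map_sub, map_mul, hπu, map_one]
        nth_rw 2 [← h1.unit_spec]
        rw [Units.inv_mul, sub_self]
      have e2 : σ' (u * s - 1) = 0 := by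
        rw [map_sub, map_mul, hσu, map_one, hv2, sub_self]
      have := hjoint _ e1 e2
      rwa [sub_eq_zero] at this
    have hut : u = t := by
      calc u = u * (s * t) := by rw [hst, mul_one]
        _ = u * s * t := by rw [mul_assoc]
        _ = t := by rw [hus, one_mul]
    exact ⟨⟨s, t, hst, by rw [← hut]; exact hus⟩, rfl⟩
  -- the main density statement
  have key : RR.LgSaDense (Unitization ℂ E) (n + 1) := by
    intro x hx ε hε
    have hBdense : RR.LgSaDense (Unitization ℂ B) (n + 1) :=
      RRAux.lgSaDense_of_uRealRank_le hB
    obtain ⟨y, hy_sa, hy_unit, hy_norm⟩ :=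
      hBdense (fun i => π' (x i)) (fun i => (hx i).map π') (ε / 2) (by linarith)
    choose d hd_sa hd_map hd_norm using fun i =>
      RRAux.exists_selfAdjoint_lift π hπ (y i - π' (x i)) ((hy_sa i).sub ((hx i).map π'))
    set x' : Fin (n + 1) → Unitization ℂ E := fun i => x i + d i with hx'def
    have hx'_sa : ∀ i, IsSelfAdjoint (x' i) := fun i => (hx i).add (hd_sa i)
    have hx'_π : ∀ i, π' (x' i) = y i := fun i => by
      rw [hx'def]
      simp only [map_add]; rw [show π' (d i) = y i - π' (x i) from hd_map i]
      abel
    have hx'_norm : ∀ i, ‖x i - x' i‖ < ε / 2 := fun i => by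
      have h1 : ‖x i - x' i‖ = ‖d i‖ := by
        rw [hx'def]; simp only [sub_add_cancel_left, norm_neg]
      rw [h1]
      exact lt_of_le_of_lt (hd_norm i) (by simpa [norm_sub_rev] using hy_norm i)
    set a : Fin (n + 1) → 𝓜(ℂ, A) := fun i => σ' (x' i) with hadef
    have ha_sa : ∀ i, IsSelfAdjoint (a i) := fun i => (hx'_sa i).map σ'
    obtain ⟨c', hc'⟩ := hπ'surj ↑(hy_unit.unit⁻¹)
    have hsum : ∀ i : Fin (n+1), True := fun _ => trivial
    have hπsum : π' (∑ i, x' i ^ 2) = ∑ i, y i ^ 2 := by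
      rw [map_sum]
      exact Finset.sum_congr rfl fun i _ => by rw [map_pow, hx'_π]
    have hσsum : σ' (∑ i, x' i ^ 2) = ∑ i, a i ^ 2 := by
      rw [map_sum]
      exact Finset.sum_congr rfl fun i _ => by rw [map_pow]
    have hmodL : σ' c' * (∑ i, a i ^ 2) - 1 ∈ RR.mIdeal A := by
      have h0 : π' (c' * (∑ i, x' i ^ 2) - 1) = 0 := by
        rw [map_sub, map_mul, hc', map_one, hπsum]
        nth_rw 2 [← hy_unit.unit_spec]
        rw [Units.inv_mul, sub_self]
      obtain ⟨w, hw⟩ := hπ'0 _ h0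
      refine ⟨w, ?_⟩
      rw [← hσ'_ι w, ← hw, map_sub, map_mul, map_one, hσsum]
    have hmodR : (∑ i, a i ^ 2) * σ' c' - 1 ∈ RR.mIdeal A := by
      have h0 : π' ((∑ i, x' i ^ 2) * c' - 1) = 0 := by
        rw [map_sub, map_mul, hc', map_one, hπsum]
        nth_rw 1 [← hy_unit.unit_spec]
        rw [Units.mul_inv, sub_self]
      obtain ⟨w, hw⟩ := hπ'0 _ h0
      refine ⟨w, ?_⟩
      rw [← hσ'_ι w, ← hw, map_sub, map_mul, map_one, hσsum]
    obtain ⟨b, hb_sa, hb_unit, hb⟩ := hΛ a ha_sa ⟨σ' c', hmodL, hmodR⟩ (ε / 2) (by linarith)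
    choose w hw using fun i => (hb i).2
    set x'' : Fin (n + 1) → Unitization ℂ E :=
      fun i => x' i - ((ι (w i) : E) : Unitization ℂ E) with hx''def
    have hw_sa : ∀ i, IsSelfAdjoint (w i) := fun i => by
      refine RRAux.coe_injective ?_
      rw [← RRAux.coe_star, hw i, (((ha_sa i).sub (hb_sa i)).star_eq : _)]
    have hx''_sa : ∀ i, IsSelfAdjoint (x'' i) := fun i => by
      rw [hx''def]
      refine (hx'_sa i).sub ?_
      rw [IsSelfAdjoint, ← Unitization.inr_star, ← map_star, (hw_sa i).star_eq]
    have hσx'' : ∀ i, σ' (x'' i) = b i := fun i => by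
      rw [hx''def]
      simp only [map_sub, hσ'_ι, hw i]
      show a i - (a i - b i) = b i
      abel
    have hπx'' : ∀ i, π' (x'' i) = y i := fun i => by
      rw [hx''def]
      simp only [map_sub, hπ'_ι, sub_zero, hx'_π]
    refine ⟨x'', hx''_sa, ?_, ?_⟩
    · refine hunit _ ?_ ?_
      · rw [map_sum]
        have : ∀ i ∈ Finset.univ, π' (x'' i ^ 2) = y i ^ 2 := fun i _ => by
          rw [map_pow, hπx'']
        rw [Finset.sum_congr rfl this]
        exact hy_unit
      · rw [map_sum]
        have : ∀ i ∈ Finset.univ, σ' (x'' i ^ 2) = b i ^ 2 := fun i _ => by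
          rw [map_pow, hσx'']
        rw [Finset.sum_congr rfl this]
        exact hb_unit
    · intro i
      have h2 : ‖x' i - x'' i‖ < ε / 2 := by
        have e1 : x' i - x'' i = ((ι (w i) : E) : Unitization ℂ E) := by
          show x' i - (x' i - _) = _
          rw [sub_sub_cancel]
        rw [e1, Unitization.norm_inr, NonUnitalStarAlgHom.norm_map ι hι,
          ← RRAux.norm_coe, hw i]
        exact (hb i).1
      calc ‖x i - x'' i‖ = ‖(x i - x' i) + (x' i - x'' i)‖ := by abel_nf
        _ ≤ ‖x i - x' i‖ + ‖x' i - x'' i‖ := norm_add_le _ _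
        _ < ε / 2 + ε / 2 := add_lt_add (hx'_norm i) h2
        _ = ε := by linarith
  exact sInf_le ⟨n, rfl, key⟩
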